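/- The 2-torsion subgroup of E(ℚ) has exactly two elements: the identity and the point P₀ = (0, 0). Equivalently, the only rational point P ≠ 0 on E with 2P = 0 is (0, 0). -/

import Mathlib

open WeierstrassCurve.Affine

/-- The elliptic curve `y² = x³ − 5(m+16n²)x² + 4(m+16n²)(m+25n²)x` over `ℚ`. -/
def zywinaCurve (m n : ℕ) : WeierstrassCurve ℚ where
  a₁ := 0
  a₂ := -(5 * ((m : ℚ) + 16 * n ^ 2))
  a₃ := 0
  a₄ := 4 * ((m : ℚ) + 16 * n ^ 2) * ((m : ℚ) + 25 * n ^ 2)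
  a₆ := 0

lemma zywina_not_square (m n : ℕ) (hn : 0 < n) (hm1 : Nat.Prime m)
    (hm2 : Nat.Prime (m + 16 * n ^ 2)) : ¬ IsSquare (m * (m + 16 * n ^ 2)) := by
  intro h
  have hne : m ≠ m + 16 * n ^ 2 := by nlinarith [sq_nonneg n]
  have hcop : Nat.Coprime m (m + 16 * n ^ 2) := (Nat.coprime_primes hm1 hm2).mpr hne
  have hsf : Squarefree (m * (m + 16 * n ^ 2)) :=
    (Nat.squarefree_mul hcop).mpr ⟨hm1.squarefree, hm2.squarefree⟩
  obtain ⟨k, hk⟩ := h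
  have : IsUnit k := hsf k (hk ▸ dvd_refl _)
  have : m * (m + 16 * n ^ 2) = 1 := by
    rw [hk, Nat.isUnit_iff.mp this]
  nlinarith [hm1.two_le, hm2.two_le]

theorem two_torsion_of_zywinaCurve (m n : ℕ) (hm : 0 < m) (hn : 0 < n)
    (hm1 : Nat.Prime m) (hm2 : Nat.Prime (m + 16 * n ^ 2)) (hm3 : Nat.Prime (m + 25 * n ^ 2))
    (hc1 : m % 24 = 11) (hc2 : (m + 16 * n ^ 2) % 24 = 11) (hc3 : (m + 25 * n ^ 2) % 24 = 11) :
    ∃ h0 : (zywinaCurve m n).toAffine.Nonsingular 0 0,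
      WeierstrassCurve.Affine.Point.some 0 0 h0 ≠ 0 ∧
      ∀ P : (zywinaCurve m n).toAffine.Point,
        2 • P = 0 ↔ (P = 0 ∨ P = WeierstrassCurve.Affine.Point.some 0 0 h0) := by
  have ha : (0:ℚ) < (m : ℚ) + 16 * n ^ 2 := by positivity
  have hb : (0:ℚ) < (m : ℚ) + 25 * n ^ 2 := by positivity
  have h0 : (zywinaCurve m n).toAffine.Nonsingular 0 0 := by
    rw [nonsingular_zero]
    refine ⟨rfl, Or.inr ?_⟩
    show 4 * ((m : ℚ) + 16 * n ^ 2) * ((m : ℚ) + 25 * n ^ 2) ≠ 0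
    positivity
  refine ⟨h0, WeierstrassCurve.Affine.Point.some_ne_zero h0, fun P => ?_⟩
  have key : ∀ x : ℚ, x ^ 2 - 5 * ((m : ℚ) + 16 * n ^ 2) * x
      + 4 * ((m : ℚ) + 16 * n ^ 2) * ((m : ℚ) + 25 * n ^ 2) ≠ 0 := by
    intro x hx
    apply zywina_not_square m n hn hm1 hm2
    rw [← Rat.isSquare_natCast_iff]
    refine ⟨(2 * x - 5 * ((m : ℚ) + 16 * n ^ 2)) / 3, ?_⟩
    push_cast
    field_simp
    ring_nf
    ring_nf at hx
    nlinarith [hx]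
  rw [two_nsmul, add_eq_zero_iff_eq_neg]
  cases P with
  | zero => simp [WeierstrassCurve.Affine.Point.zero_def]; rfl
  | @some x y h =>
    rw [WeierstrassCurve.Affine.Point.neg_some]
    constructor
    · intro hP
      injection hP with hx hy
      -- hy : y = negY x y
      right
      have hy0 : y = 0 := by
        have := hy
        simp only [WeierstrassCurve.Affine.negY] at this
        show y = 0
        have ha1 : (zywinaCurve m n).a₁ = 0 := rfl
        have ha3 : (zywinaCurve m n).a₃ = 0 := rfl
        rw [ha1, ha3] at this
        linarith
      have heq := h.left
      rw [equation_iff] at heq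
      have ha1 : (zywinaCurve m n).a₁ = 0 := rfl
      have ha2 : (zywinaCurve m n).a₂ = -(5 * ((m : ℚ) + 16 * n ^ 2)) := rfl
      have ha3 : (zywinaCurve m n).a₃ = 0 := rfl
      have ha4 : (zywinaCurve m n).a₄ = 4 * ((m : ℚ) + 16 * n ^ 2) * ((m : ℚ) + 25 * n ^ 2) := rfl
      have ha6 : (zywinaCurve m n).a₆ = 0 := rfl
      rw [ha1, ha2, ha3, ha4, ha6, hy0] at heq
      have hx0 : x = 0 := by
        by_contra hx0
        apply key x
        have : x * (x ^ 2 - 5 * ((m : ℚ) + 16 * n ^ 2) * x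
            + 4 * ((m : ℚ) + 16 * n ^ 2) * ((m : ℚ) + 25 * n ^ 2)) = 0 := by linarith [heq]; 
        rcases mul_eq_zero.mp this with h' | h'
        · exact absurd h' hx0
        · exact h'
      subst hx0; subst hy0
      rfl
    · intro hP
      rcases hP with hP | hP
      · exact absurd hP (WeierstrassCurve.Affine.Point.some_ne_zero h)
      · injection hP with hx hy
        subst hx; subst hy
        congr 1
        simp [WeierstrassCurve.Affine.negY]
        rfl
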